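/- For every minimal left ideal I of (C,*) there exists an idempotent u ∈ I (i.e. u*u = u) such that u is an extreme point of the set u*I := {u*p : p ∈ I}. -/

import Mathlib

/-- `I` is a left ideal of the semigroup `(C, mul)`: a nonempty subset of `C`
closed under left multiplication by elements of `C`. -/
def IsLeftIdeal {V : Type*} (C : Set V) (mul : V → V → V) (I : Set V) : Prop :=
  I.Nonempty ∧ I ⊆ C ∧ ∀ c ∈ C, ∀ i ∈ I, mul c i ∈ I

/-- `I` is a minimal left ideal of the semigroup `(C, mul)`. -/
def IsMinimalLeftIdeal {V : Type*} (C : Set V) (mul : V → V → V) (I : Set V) : Prop :=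
  IsLeftIdeal C mul I ∧ ∀ J : Set V, IsLeftIdeal C mul J → J ⊆ I → J = I

/-- `x` is an extreme point of `A`: `x ∈ A` and `x` cannot be written as a proper
convex combination of two distinct points of `A`. -/
def IsExtremePt {V : Type*} [AddCommGroup V] [Module ℝ V] (A : Set V) (x : V) : Prop :=
  x ∈ A ∧ ∀ a ∈ A, ∀ b ∈ A, ∀ r : ℝ, 0 < r → r < 1 → x = r • a + (1 - r) • b → a = b

/-- Every minimal left ideal `I` of a compact convex left-continuous affine semigroup
contains an idempotent `u` which is an extreme point of the ideal subgroup `u*I`. -/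
theorem exists_idempotent_extreme_in_ideal_group
    {V : Type*} [AddCommGroup V] [Module ℝ V] [TopologicalSpace V]
    [IsTopologicalAddGroup V] [ContinuousSMul ℝ V] [T2Space V] [LocallyConvexSpace ℝ V]
    (C : Set V) (hCne : C.Nonempty) (hCcomp : IsCompact C) (hCconv : Convex ℝ C)
    (mul : V → V → V)
    (hclosed : ∀ p ∈ C, ∀ q ∈ C, mul p q ∈ C)
    (hassoc : ∀ p ∈ C, ∀ q ∈ C, ∀ r ∈ C, mul (mul p q) r = mul p (mul q r))
    (hcont : ∀ q ∈ C, ContinuousOn (fun p => mul p q) C)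
    (haffl : ∀ q ∈ C, ∀ a ∈ C, ∀ b ∈ C, ∀ r : ℝ, 0 ≤ r → r ≤ 1 →
      mul (r • a + (1 - r) • b) q = r • mul a q + (1 - r) • mul b q)
    (haffr : ∀ p ∈ C, ∀ a ∈ C, ∀ b ∈ C, ∀ r : ℝ, 0 ≤ r → r ≤ 1 →
      mul p (r • a + (1 - r) • b) = r • mul p a + (1 - r) • mul p b)
    (I : Set V) (hI : IsMinimalLeftIdeal C mul I) :
    ∃ u ∈ I, mul u u = u ∧ IsExtremePt ((fun p => mul u p) '' I) u := by
  obtain ⟨⟨⟨i0, hi0⟩, hIC, hIdeal⟩, hmin⟩ := hI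
  -- For every `g ∈ I`, `C * g = I`.
  have hCg : ∀ g ∈ I, (fun p => mul p g) '' C = I := by
    intro g hg
    refine hmin _ ⟨⟨mul g g, g, hIC hg, rfl⟩, ?_, ?_⟩ ?_
    · rintro _ ⟨p, hp, rfl⟩; exact hclosed p hp g (hIC hg)
    · rintro c hc _ ⟨p, hp, rfl⟩
      refine ⟨mul c p, hclosed c hc p hp, ?_⟩
      show mul (mul c p) g = mul c (mul p g)
      exact hassoc c hc p hp g (hIC hg)
    · rintro _ ⟨p, hp, rfl⟩; exact hIdeal p hp g hg
  have hIeq := hCg i0 hi0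
  have hIcomp : IsCompact I := by
    rw [← hIeq]; exact hCcomp.image_of_continuousOn (hcont i0 (hIC hi0))
  -- `I` has an extreme point `x`.
  obtain ⟨x, hx⟩ := hIcomp.extremePoints_nonempty ⟨i0, hi0⟩
  rw [mem_extremePoints] at hx
  obtain ⟨hxI, hxext⟩ := hx
  have hxC : x ∈ C := hIC hxI
  -- `I * x = I`, so there is `u0 ∈ I` with `u0 * x = x`.
  have hIx : (fun p => mul p x) '' I = I := by
    refine hmin _ ⟨⟨mul x x, x, hxI, rfl⟩, ?_, ?_⟩ ?_
    · rintro _ ⟨p, hp, rfl⟩; exact hIC (hIdeal p (hIC hp) x hxI)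
    · rintro c hc _ ⟨p, hp, rfl⟩
      refine ⟨mul c p, hIdeal c hc p hp, ?_⟩
      show mul (mul c p) x = mul c (mul p x)
      exact hassoc c hc p (hIC hp) x hxC
    · rintro _ ⟨p, hp, rfl⟩; exact hIdeal p (hIC hp) x hxI
  -- The stabilizer `T = {p ∈ I | p * x = x}` is a nonempty compact subsemigroup.
  set T : Set V := {p | p ∈ I ∧ mul p x = x} with hTdef
  have hTne : T.Nonempty := by
    have : x ∈ (fun p => mul p x) '' I := by rw [hIx]; exact hxI
    obtain ⟨u0, hu0, hux0⟩ := this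
    exact ⟨u0, hu0, hux0⟩
  have hTC : T ⊆ C := fun p hp => hIC hp.1
  have hTcomp : IsCompact T := by
    have hclT : IsClosed T := by
      have : T = I ∩ (fun p => mul p x) ⁻¹' {x} := by
        ext p; simp [hTdef, Set.mem_preimage]
      rw [this]
      exact ContinuousOn.preimage_isClosed_of_isClosed
        ((hcont x hxC).mono hIC) hIcomp.isClosed isClosed_singleton
    exact hIcomp.of_isClosed_subset hclT (fun p hp => hp.1)
  have hTmul : ∀ p ∈ T, ∀ q ∈ T, mul p q ∈ T := by
    rintro p ⟨hpI, hpx⟩ q ⟨hqI, hqx⟩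
    refine ⟨hIdeal p (hIC hpI) q hqI, ?_⟩
    rw [hassoc p (hIC hpI) q (hIC hqI) x hxC, hqx, hpx]
  -- Ellis-type argument: `T` contains an idempotent `u`.
  have hidem : ∃ u ∈ T, mul u u = u := by
    let M' := { m // m ∈ T }
    letI : Semigroup M' :=
      { mul := fun p q => ⟨mul p.1 q.1, hTmul _ p.2 _ q.2⟩
        mul_assoc := fun p q r =>
          Subtype.ext (hassoc _ (hTC p.2) _ (hTC q.2) _ (hTC r.2)) }
    haveI : CompactSpace M' := isCompact_iff_compactSpace.mp hTcomp
    haveI : Nonempty M' := nonempty_subtype.mpr hTne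
    have hcm : ∀ p : M', Continuous (· * p) := fun p =>
      Continuous.subtype_mk
        ((hcont p.1 (hTC p.2)).comp_continuous continuous_subtype_val fun q => hTC q.2) _
    obtain ⟨⟨u, huT⟩, idem⟩ := exists_idempotent_of_compact_t2_of_continuous_mul_left hcm
    exact ⟨u, huT, Subtype.ext_iff.mp idem⟩
  obtain ⟨u, ⟨huI, hux⟩, huu⟩ := hidem
  have huC : u ∈ C := hIC huI
  -- The "group" `G = u * I`.
  set G : Set V := (fun p => mul u p) '' I with hGdef
  have hGI : G ⊆ I := by rintro _ ⟨p, hp, rfl⟩; exact hIdeal u huC p hp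
  have huG : u ∈ G := ⟨u, huI, huu⟩
  have hxG : x ∈ G := ⟨x, hxI, hux⟩
  -- `u` is a left identity on `G`.
  have hid : ∀ g ∈ G, mul u g = g := by
    rintro _ ⟨p, hp, rfl⟩
    rw [← hassoc u huC u huC p (hIC hp), huu]
  -- Every element of `G` has a left inverse in `G` (relative to `u`).
  have hinv : ∀ g ∈ G, ∃ y ∈ G, mul y g = u := by
    intro g hg
    have hgI : g ∈ I := hGI hg
    have hgC : g ∈ C := hIC hgI
    have : u ∈ (fun p => mul p g) '' C := by rw [hCg g hgI]; exact huI
    obtain ⟨c, hc, hcg⟩ := this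
    have hcg' : mul c g = u := hcg
    refine ⟨mul u (mul c u), ⟨mul c u, hIdeal c hc u huI, rfl⟩, ?_⟩
    have hcuC : mul c u ∈ C := hclosed c hc u huC
    rw [hassoc u huC (mul c u) hcuC g hgC,
        hassoc c hc u huC g hgC, hid g hg, hcg', huu]
  obtain ⟨y, hyG, hyx⟩ := hinv x hxG
  have hyI : y ∈ I := hGI hyG
  have hyC : y ∈ C := hIC hyI
  -- `x * y = u` (a left inverse is a right inverse).
  have hxy : mul x y = u := by
    obtain ⟨z, hzG, hzy⟩ := hinv y hyG
    have hzC : z ∈ C := hIC (hGI hzG)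
    have h1 : mul u (mul x y) = mul x y := by
      rw [← hassoc u huC x hxC y hyC, hid x hxG]
    calc mul x y = mul u (mul x y) := h1.symm
      _ = mul (mul z y) (mul x y) := by rw [hzy]
      _ = mul z (mul y (mul x y)) := hassoc z hzC y hyC (mul x y) (hclosed x hxC y hyC)
      _ = mul z (mul (mul y x) y) := by rw [hassoc y hyC x hxC y hyC]
      _ = mul z (mul u y) := by rw [hyx]
      _ = mul z y := by rw [hid y hyG]
      _ = u := hzy
  -- `x * u = x`.
  have hxu : mul x u = x := by
    rw [← hyx, ← hassoc x hxC y hyC x hxC, hxy, hux]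
  -- Conclusion.
  refine ⟨u, huI, huu, huG, ?_⟩
  intro a haG b hbG r hr0 hr1 heq
  have haI : a ∈ I := hGI haG
  have hbI : b ∈ I := hGI hbG
  have haC : a ∈ C := hIC haI
  have hbC : b ∈ C := hIC hbI
  have hxa : mul x a ∈ I := hIdeal x hxC a haI
  have hxb : mul x b ∈ I := hIdeal x hxC b hbI
  have hsplit : x = r • mul x a + (1 - r) • mul x b := by
    rw [← haffr x hxC a haC b hbC r hr0.le hr1.le, ← heq, hxu]
  have hseg : x ∈ openSegment ℝ (mul x a) (mul x b) :=
    ⟨r, 1 - r, hr0, by linarith, by ring, hsplit.symm⟩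
  obtain ⟨hax, hbx⟩ := hxext (mul x a) hxa (mul x b) hxb hseg
  have hab : mul x a = mul x b := hax.trans hbx.symm
  calc a = mul u a := (hid a haG).symm
    _ = mul (mul y x) a := by rw [hyx]
    _ = mul y (mul x a) := hassoc y hyC x hxC a haC
    _ = mul y (mul x b) := by rw [hab]
    _ = mul (mul y x) b := (hassoc y hyC x hxC b hbC).symm
    _ = mul u b := by rw [hyx]
    _ = b := hid b hbG
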